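/- Let n ≥ 1 and let f : EuclideanSpace ℝ (Fin n) → ℝ be a twice continuously differentiable function with f ≥ 0 everywhere and Δf ≥ 2·f² everywhere, where Δf(x) = ∑ᵢ D²f(x)(eᵢ, eᵢ) is the Euclidean Laplacian (the trace of the second derivative over an orthonormal basis (eᵢ)). Then f is identically zero. -/

import Mathlib

open Filter Topology Metric Set

lemma second_deriv_nonpos {ψ G : ℝ → ℝ} {D : ℝ}
    (hmax : IsLocalMax ψ 0)
    (hψ : ∀ t, HasDerivAt ψ (G t) t)
    (hG : HasDerivAt G D 0) : D ≤ 0 := by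
  by_contra hD
  push_neg at hD
  have hG0 : G 0 = 0 := hmax.hasDerivAt_eq_zero (hψ 0)
  have hslope : Tendsto (slope G 0) (𝓝[≠] 0) (𝓝 D) :=
    hasDerivAt_iff_tendsto_slope.mp hG
  have hpos : ∀ᶠ t in 𝓝[≠] (0:ℝ), 0 < slope G 0 t :=
    hslope.eventually (eventually_gt_nhds hD)
  have hmono : 𝓝[>] (0:ℝ) ≤ 𝓝[≠] (0:ℝ) :=
    nhdsWithin_mono 0 (fun t ht => ne_of_gt ht)
  have hpos' : ∀ᶠ t in 𝓝[>] (0:ℝ), 0 < G t := by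
    filter_upwards [hpos.filter_mono hmono, self_mem_nhdsWithin] with t ht ht0
    have hs : slope G 0 t = G t / t := by simp [slope_def_field, hG0]
    rw [hs] at ht
    have ht0' : (0:ℝ) < t := ht0
    exact (div_pos_iff.mp ht).elim (fun h => h.1) (fun h => absurd ht0' (not_lt.2 h.2.le))
  have hmax' : ∀ᶠ t in 𝓝[>] (0:ℝ), ψ t ≤ ψ 0 :=
    hmax.filter_mono nhdsWithin_le_nhds
  obtain ⟨u, hu, hsub⟩ := mem_nhdsGT_iff_exists_Ioo_subset.mp (hpos'.and hmax')
  have hu0 : (0:ℝ) < u := hu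
  set b := u / 2 with hb
  have hb0 : 0 < b := by positivity
  have hbu : b < u := by simp [hb]; linarith
  have hmem : b ∈ Ioo (0:ℝ) u := ⟨hb0, hbu⟩
  have hmonoψ : StrictMonoOn ψ (Icc 0 b) := by
    apply strictMonoOn_of_deriv_pos (convex_Icc 0 b)
    · exact fun t _ => ((hψ t).differentiableAt).continuousAt.continuousWithinAt
    · intro t ht
      rw [interior_Icc] at ht
      rw [(hψ t).deriv]
      exact (hsub ⟨ht.1, lt_trans ht.2 hbu⟩).1
  have h1 : ψ 0 < ψ b := hmonoψ (left_mem_Icc.2 hb0.le) (right_mem_Icc.2 hb0.le) hb0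
  have h2 : ψ b ≤ ψ 0 := (hsub hmem).2
  linarith

variable {n : ℕ}
local notation "E" => EuclideanSpace ℝ (Fin n)

lemma line_hasDerivAt {f : E → ℝ} (hf : Differentiable ℝ f) (x v : E) (t : ℝ) :
    HasDerivAt (fun s : ℝ => f (x + s • v)) (fderiv ℝ f (x + t • v) v) t := by
  have h1 : HasDerivAt (fun s : ℝ => x + s • v) v t := by
    simpa using ((hasDerivAt_id t).smul_const v).const_add x
  exact (hf _).hasFDerivAt.comp_hasDerivAt t h1

lemma line2_hasDerivAt {f : E → ℝ} (hf : ContDiff ℝ 2 f) (x v : E) :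
    HasDerivAt (fun s : ℝ => fderiv ℝ f (x + s • v) v)
      (fderiv ℝ (fderiv ℝ f) x v v) 0 := by
  have hfd : Differentiable ℝ (fderiv ℝ f) :=
    (hf.fderiv_right (by norm_num : (1:WithTop ℕ∞) + 1 ≤ 2)).differentiable one_ne_zero
  have h1 : HasDerivAt (fun s : ℝ => x + s • v) v 0 := by
    simpa using ((hasDerivAt_id (0:ℝ)).smul_const v).const_add x
  have h2 : HasDerivAt (fun s : ℝ => fderiv ℝ f (x + s • v))
      (fderiv ℝ (fderiv ℝ f) x v) 0 := by
    have := (hfd (x + (0:ℝ) • v)).hasFDerivAt.comp_hasDerivAt 0 h1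
    simpa [Function.comp_def] using this
  have h3 := h2.clm_apply (hasDerivAt_const 0 v)
  simpa using h3

lemma norm_add_smul_single (a : E) (i : Fin n) (t : ℝ) :
    ‖a + t • EuclideanSpace.single i (1:ℝ)‖ ^ 2 = ‖a‖ ^ 2 + 2 * (a i) * t + t ^ 2 := by
  rw [norm_add_sq_real, real_inner_smul_right, EuclideanSpace.inner_single_right, norm_smul]
  simp [EuclideanSpace.norm_single]
  ring

lemma sum_sq_coords (a : E) : ∑ i, (a i) ^ 2 = ‖a‖ ^ 2 := by
  rw [← real_inner_self_eq_norm_sq]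
  rw [PiLp.inner_apply]
  exact Finset.sum_congr rfl fun i _ => by simp [RCLike.inner_apply, sq]

set_option maxHeartbeats 1000000 in
lemma key {f : E → ℝ} (hf : ContDiff ℝ 2 f) (hpos : ∀ x, 0 ≤ f x)
    (hineq : ∀ x, 2 * f x ^ 2 ≤
      ∑ i, fderiv ℝ (fderiv ℝ f) x (EuclideanSpace.single i (1:ℝ)) (EuclideanSpace.single i (1:ℝ)))
    (x₀ : E) (R : ℝ) (hR : 0 < R) :
    f x₀ * R ^ 4 ≤ (12 + 2 * n) * R ^ 2 := by
  set g : E → ℝ := fun y => f y * (R ^ 2 - ‖y - x₀‖ ^ 2) ^ 2 with hgdef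
  have hgc : Continuous g := by
    apply hf.continuous.mul
    fun_prop
  obtain ⟨p, hpK, hmaxp⟩ := (isCompact_closedBall x₀ R).exists_isMaxOn
    ⟨x₀, mem_closedBall_self hR.le⟩ hgc.continuousOn
  have hx₀g : f x₀ * R ^ 4 = g x₀ := by
    show f x₀ * R ^ 4 = f x₀ * (R ^ 2 - ‖x₀ - x₀‖ ^ 2) ^ 2
    rw [sub_self, norm_zero]; ring
  have hgx₀_le : g x₀ ≤ g p := hmaxp (mem_closedBall_self hR.le)
  have hRHS : (0:ℝ) ≤ (12 + 2 * n) * R ^ 2 := by positivity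
  suffices hgp : g p ≤ (12 + 2 * n) * R ^ 2 by rw [hx₀g]; linarith
  have hpR : ‖p - x₀‖ ≤ R := by simpa [dist_eq_norm] using hpK
  rcases eq_or_lt_of_le hpR with hb | hint
  · rw [hgdef]; simp only
    rw [hb]
    simp
    positivity
  · -- interior case
    set a : E := p - x₀ with ha
    set r2 : ℝ := ‖a‖ ^ 2 with hr2
    set s : ℝ := R ^ 2 - r2 with hs
    have hr2nn : 0 ≤ r2 := sq_nonneg _
    have hspos : 0 < s := by
      have : ‖a‖ ^ 2 < R ^ 2 := by nlinarith [norm_nonneg a]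
      simp [hs]; linarith
    have hr2R : r2 ≤ R ^ 2 := by nlinarith [norm_nonneg a]
    have hsR : s ≤ R ^ 2 := by simp [hs]; linarith
    have hloc : IsLocalMax g p := hmaxp.isLocalMax
      (closedBall_mem_nhds_of_mem (by simpa [dist_eq_norm] using hint))
    have hfdiff : Differentiable ℝ f := hf.differentiable (by norm_num)
    have key_i : ∀ i : Fin n,
        fderiv ℝ (fderiv ℝ f) p (EuclideanSpace.single i (1:ℝ)) (EuclideanSpace.single i (1:ℝ)) * s ^ 2
          ≤ 24 * (a i) ^ 2 * f p + 4 * s * f p := by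
      intro i
      set v : E := EuclideanSpace.single i (1:ℝ) with hv
      set H : ℝ := fderiv ℝ (fderiv ℝ f) p v v with hH
      set Q : ℝ → ℝ := fun t => s - 2 * (a i) * t - t ^ 2 with hQdef
      have hline : ∀ t : ℝ, g (p + t • v) = f (p + t • v) * (Q t) ^ 2 := by
        intro t
        have he : (p + t • v) - x₀ = a + t • v := by rw [ha]; abel
        have hn2 : ‖(p + t • v) - x₀‖ ^ 2 = r2 + 2 * (a i) * t + t ^ 2 := by
          rw [he, hv, norm_add_smul_single]
        rw [hgdef]
        simp only
        rw [hn2]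
        have : R ^ 2 - (r2 + 2 * (a i) * t + t ^ 2) = Q t := by rw [hQdef]; simp [hs]; ring
        rw [this]
      have hcont : Continuous (fun t : ℝ => p + t • v) := by fun_prop
      have hψmax : IsLocalMax (fun t : ℝ => f (p + t • v) * (Q t) ^ 2) 0 := by
        have ht : Tendsto (fun t : ℝ => p + t • v) (𝓝 0) (𝓝 p) :=
          hcont.tendsto' 0 p (by simp)
        have h0 := ht.eventually hloc
        have : IsLocalMax (fun t : ℝ => g (p + t • v)) 0 := by
          simpa [IsLocalMax, IsMaxFilter] using h0
        simpa [hline] using this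
      have hQd : ∀ t, HasDerivAt Q (-(2 * (a i)) - 2 * t) t := by
        intro t
        have h1 : HasDerivAt (fun t : ℝ => s - 2 * (a i) * t - t ^ 2)
            (0 - 2 * (a i) * 1 - 2 * t ^ 1) t := by
          exact ((hasDerivAt_const t s).sub ((hasDerivAt_id t).const_mul (2 * (a i)))).sub
            (hasDerivAt_pow 2 t)
        convert h1 using 1
        ring
      have hQ2 : ∀ t, HasDerivAt (fun t => (Q t) ^ 2) (2 * Q t * (-(2 * (a i)) - 2 * t)) t := by
        intro t
        have := (hQd t).pow 2
        exact this.congr_deriv (by push_cast; ring)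
      set F' : ℝ → ℝ := fun t => fderiv ℝ f (p + t • v) v with hF'
      have hFd : ∀ t, HasDerivAt (fun t : ℝ => f (p + t • v)) (F' t) t :=
        fun t => line_hasDerivAt hfdiff p v t
      set G : ℝ → ℝ := fun t =>
        F' t * (Q t) ^ 2 + f (p + t • v) * (2 * Q t * (-(2 * (a i)) - 2 * t)) with hG
      have hψd : ∀ t, HasDerivAt (fun t : ℝ => f (p + t • v) * (Q t) ^ 2) (G t) t :=
        fun t => (hFd t).mul (hQ2 t)
      have hG0 : G 0 = 0 := hψmax.hasDerivAt_eq_zero (hψd 0)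
      have hQ0 : Q 0 = s := by simp [hQdef]
      have hp0 : p + (0:ℝ) • v = p := by simp
      have hfirst : F' 0 * s ^ 2 = 4 * s * (a i) * f p := by
        have := hG0
        rw [hG] at this
        simp only [hQ0, hp0] at this
        linear_combination this
      -- second derivative of G at 0
      have hF'd : HasDerivAt F' H 0 := by
        rw [hF', hH]
        exact line2_hasDerivAt hf p v
      have hLd : ∀ t : ℝ, HasDerivAt (fun t : ℝ => -(2 * (a i)) - 2 * t) (-2) t := by
        intro t
        have h1 : HasDerivAt (fun t : ℝ => -(2 * (a i)) - 2 * t) (0 - 2 * 1) t :=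
          (hasDerivAt_const t _).sub ((hasDerivAt_id t).const_mul 2)
        convert h1 using 1; ring
      have hEd : HasDerivAt (fun t => 2 * Q t * (-(2 * (a i)) - 2 * t))
          ((2 * (-(2 * (a i)) - 2 * 0)) * (-(2 * (a i)) - 2 * 0) + (2 * Q 0) * (-2)) 0 := by
        exact (((hQd 0).const_mul 2).mul (hLd 0))
      have hGd : HasDerivAt G
          ((H * (Q 0) ^ 2 + F' 0 * (2 * Q 0 * (-(2 * (a i)) - 2 * 0))) +
           (F' 0 * (2 * Q 0 * (-(2 * (a i)) - 2 * 0)) +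
            f (p + (0:ℝ) • v) * ((2 * (-(2 * (a i)) - 2 * 0)) * (-(2 * (a i)) - 2 * 0) + (2 * Q 0) * (-2)))) 0 := by
        exact (hF'd.mul (hQ2 0)).add ((hFd 0).mul hEd)
      have hDle := second_deriv_nonpos hψmax hψd hGd
      rw [hQ0, hp0] at hDle
      -- hDle : H * s^2 + F'0 * (2s(-2aᵢ)) + (F'0 * (2s(-2aᵢ)) + f p * ((2(-2aᵢ))(-2aᵢ) + 2s(-2))) ≤ 0
      have hsF : s * F' 0 = 4 * (a i) * f p := by
        have hs0 : s ≠ 0 := ne_of_gt hspos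
        have h2 : s * (s * F' 0) = s * (4 * (a i) * f p) := by linear_combination hfirst
        exact mul_left_cancel₀ hs0 h2
      have h8 : 8 * (a i) * (s * F' 0) = 32 * (a i) ^ 2 * f p := by rw [hsF]; ring
      ring_nf at hDle h8 ⊢
      linarith [hDle, h8]
    have hsum := Finset.sum_le_sum (fun i (_ : i ∈ Finset.univ) => key_i i)
    rw [← Finset.sum_mul] at hsum
    have hsum2 : ∑ i : Fin n, (24 * (a i) ^ 2 * f p + 4 * s * f p)
        = 24 * r2 * f p + 4 * n * s * f p := by
      rw [Finset.sum_add_distrib, Finset.sum_const, ← Finset.sum_mul, ← Finset.mul_sum]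
      rw [Finset.mul_sum]
      have : ∑ i : Fin n, 24 * (a i) ^ 2 = 24 * r2 := by
        rw [← Finset.mul_sum, sum_sq_coords a, ← hr2]
      rw [this]
      simp [Finset.card_univ]
      ring
    rw [hsum2] at hsum
    have hΔ := hineq p
    have h2 : 2 * f p ^ 2 * s ^ 2 ≤ 24 * r2 * f p + 4 * n * s * f p := by
      have := mul_le_mul_of_nonneg_right hΔ (sq_nonneg s)
      linarith
    have hgpe : g p = f p * s ^ 2 := by
      have hh : ‖p - x₀‖ ^ 2 = r2 := by rw [hr2, ha]
      show f p * (R ^ 2 - ‖p - x₀‖ ^ 2) ^ 2 = f p * s ^ 2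
      rw [hh, ← hs]
    rcases (hpos p).eq_or_lt with hf0 | hf0
    · rw [hgpe, ← hf0]; simpa using hRHS
    · have hfp : 0 < f p := hf0
      have h3 : 2 * f p ^ 2 * s ^ 2 ≤ (24 + 4 * n) * R ^ 2 * f p := by
        have hnn : (0:ℝ) ≤ (n:ℝ) := Nat.cast_nonneg n
        nlinarith [h2, mul_le_mul_of_nonneg_left hr2R (by positivity : (0:ℝ) ≤ 24 * f p),
          mul_le_mul_of_nonneg_left hsR (by positivity : (0:ℝ) ≤ 4 * (n:ℝ) * f p)]
      have h4 : (2 * f p) * (f p * s ^ 2) ≤ (2 * f p) * ((12 + 2 * n) * R ^ 2) := by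
        nlinarith [h3]
      have h5 := le_of_mul_le_mul_left h4 (by positivity : (0:ℝ) < 2 * f p)
      rw [hgpe]; exact h5

/-- Liouville-type statement: a nonnegative `C²` function `f` on Euclidean space
with `Δf ≥ 2f²` everywhere is identically zero. -/
theorem stmt6 {n : ℕ} (hn : 1 ≤ n) (f : EuclideanSpace ℝ (Fin n) → ℝ)
    (hf : ContDiff ℝ 2 f) (hpos : ∀ x, 0 ≤ f x)
    (hineq : ∀ x,
      (∑ i, iteratedFDeriv ℝ 2 f x
        ![EuclideanSpace.basisFun (Fin n) ℝ i, EuclideanSpace.basisFun (Fin n) ℝ i]) ≥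
        2 * f x ^ 2) :
    ∀ x, f x = 0 := by
  have hineq' : ∀ y, 2 * f y ^ 2 ≤
      ∑ i, fderiv ℝ (fderiv ℝ f) y (EuclideanSpace.single i (1:ℝ)) (EuclideanSpace.single i (1:ℝ)) := by
    intro y
    have h := hineq y
    have heq : ∀ i : Fin n, iteratedFDeriv ℝ 2 f y
        ![EuclideanSpace.basisFun (Fin n) ℝ i, EuclideanSpace.basisFun (Fin n) ℝ i]
        = fderiv ℝ (fderiv ℝ f) y (EuclideanSpace.single i (1:ℝ)) (EuclideanSpace.single i (1:ℝ)) := by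
      intro i
      rw [iteratedFDeriv_two_apply]
      simp
    exact (ge_iff_le.mp h).trans_eq (Finset.sum_congr rfl fun i _ => heq i)
  intro x
  by_contra hx
  have hfx : 0 < f x := (hpos x).lt_of_ne (Ne.symm hx)
  set c : ℝ := 12 + 2 * n + 1 with hc
  have hcpos : 0 < c := by positivity
  set R : ℝ := Real.sqrt (c / f x) with hRdef
  have hRpos : 0 < R := Real.sqrt_pos.mpr (by positivity)
  have hR2 : R ^ 2 = c / f x := Real.sq_sqrt (by positivity)
  have hkey := key hf hpos hineq' x R hRpos
  have hR4 : R ^ 4 = (c / f x) ^ 2 := by rw [← hR2]; ring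
  rw [hR4, hR2] at hkey
  have hne : f x ≠ 0 := ne_of_gt hfx
  have h2 := mul_le_mul_of_nonneg_right hkey hfx.le
  have e1 : f x * (c / f x) ^ 2 * f x = c ^ 2 := by field_simp
  have e2 : (12 + 2 * (n:ℝ)) * (c / f x) * f x = (12 + 2 * n) * c := by field_simp
  rw [e1, e2] at h2
  nlinarith [h2, hcpos, hc]
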